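/- Let G be a group and k a field of characteristic ≠ 2, and let kG be the group algebra with the standard Hopf algebra structure (Δ(g) = g ⊗ g, S(g) = g⁻¹ for g ∈ G). Then the space C¹_ad(kG; kG) = { f ∈ Hom_k(kG, kG) | fμ = μ(f ⊗ 1) + μ(1 ⊗ f) and Δf = (f ⊗ 1)Δ + (1 ⊗ f)Δ } is zero; i.e., the only linear map on kG that is simultaneously a derivation for multiplication and a coderivation for comultiplication is the zero map. -/

import Mathlib

open TensorProduct

/-- The comultiplication of the group Hopf algebra `kG`, `Δ(g) = g ⊗ g` on group
elements. -/
noncomputable def groupComul (k G : Type*) [Field k] [Group G] :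
    MonoidAlgebra k G →ₗ[k] MonoidAlgebra k G ⊗[k] MonoidAlgebra k G :=
  (Finsupp.lsum k fun g =>
    LinearMap.toSpanSingleton k _ (MonoidAlgebra.of k G g ⊗ₜ[k] MonoidAlgebra.of k G g)) ∘ₗ
    (MonoidAlgebra.coeffLinearEquiv k).toLinearMap

noncomputable def coeff2 (k G : Type*) [Field k] [Group G] (h1 h2 : G) :
    MonoidAlgebra k G ⊗[k] MonoidAlgebra k G →ₗ[k] k :=
  (TensorProduct.lid k k).toLinearMap ∘ₗ
    TensorProduct.map (Finsupp.lapply h1 ∘ₗ (MonoidAlgebra.coeffLinearEquiv k).toLinearMap)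
      (Finsupp.lapply h2 ∘ₗ (MonoidAlgebra.coeffLinearEquiv k).toLinearMap)

lemma coeff2_tmul (k G : Type*) [Field k] [Group G] (h1 h2 : G)
    (a b : MonoidAlgebra k G) : coeff2 k G h1 h2 (a ⊗ₜ[k] b) = a.coeff h1 * b.coeff h2 := by
  simp only [coeff2, LinearMap.comp_apply, TensorProduct.map_tmul,
    LinearEquiv.coe_coe, TensorProduct.lid_tmul, smul_eq_mul]
  rfl

lemma groupComul_apply (k G : Type*) [Field k] [Group G] (c : MonoidAlgebra k G) :
    groupComul k G c = c.coeff.sum fun g r =>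
      r • (MonoidAlgebra.of k G g ⊗ₜ[k] MonoidAlgebra.of k G g) := by
  rw [groupComul, LinearMap.comp_apply]
  erw [Finsupp.lsum_apply]
  rfl

lemma coeff2_comul (k G : Type*) [Field k] [Group G] [DecidableEq G] (h1 h2 : G)
    (c : MonoidAlgebra k G) :
    coeff2 k G h1 h2 (groupComul k G c) = if h1 = h2 then c.coeff h1 else 0 := by
  classical
  induction c using MonoidAlgebra.induction_linear with
  | zero => simp
  | add a b ha hb =>
    rw [map_add, map_add, ha, hb, MonoidAlgebra.coeff_add, Finsupp.add_apply]
    split_ifs <;> simp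
  | single g r =>
    rw [groupComul_apply, MonoidAlgebra.coeff_single, Finsupp.sum_single_index (by simp), map_smul, coeff2_tmul,
      MonoidAlgebra.of_apply, smul_eq_mul]
    simp only [MonoidAlgebra.coeff_single, Finsupp.single_apply]
    split_ifs <;> simp_all

theorem group_algebra_C1_zero (k G : Type*) [Field k] [Group G]
    (hchar : (2 : k) ≠ 0) (f : MonoidAlgebra k G →ₗ[k] MonoidAlgebra k G)
    (hder : ∀ a b : MonoidAlgebra k G, f (a * b) = f a * b + a * f b)
    (hcoder : groupComul k G ∘ₗ f =
      (TensorProduct.map f LinearMap.id) ∘ₗ groupComul k G +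
        (TensorProduct.map LinearMap.id f) ∘ₗ groupComul k G) :
    f = 0 := by
  classical
  have key : ∀ g : G, f (MonoidAlgebra.of k G g) = 0 := by
    intro g
    set c := f (MonoidAlgebra.of k G g) with hc
    have hg : groupComul k G (MonoidAlgebra.of k G g) =
        MonoidAlgebra.of k G g ⊗ₜ[k] MonoidAlgebra.of k G g := by
      rw [groupComul_apply, MonoidAlgebra.of_apply, MonoidAlgebra.coeff_single, Finsupp.sum_single_index] <;> simp
    have hC := congrArg (fun F => F (MonoidAlgebra.of k G g)) hcoder
    simp only [LinearMap.comp_apply, LinearMap.add_apply] at hC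
    rw [hg] at hC
    simp only [TensorProduct.map_tmul, LinearMap.id_apply] at hC
    have hcoeff : ∀ h1 h2 : G, (if h1 = h2 then c.coeff h1 else 0) =
        c.coeff h1 * (MonoidAlgebra.of k G g).coeff h2 + (MonoidAlgebra.of k G g).coeff h1 * c.coeff h2 := by
      intro h1 h2
      have := congrArg (coeff2 k G h1 h2) hC
      rw [coeff2_comul] at this
      rw [map_add, coeff2_tmul, coeff2_tmul] at this
      exact this
    ext h
    rw [MonoidAlgebra.coeff_zero, Finsupp.zero_apply]
    by_cases hhg : h = g
    · subst hhg
      have := hcoeff h h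
      simp [MonoidAlgebra.single_apply] at this
      exact this
    · have := hcoeff h h
      simp [MonoidAlgebra.single_apply, Ne.symm hhg] at this
      exact this
  have hall : ∀ x : MonoidAlgebra k G, f x = 0 := by
    intro x
    induction x using MonoidAlgebra.induction_linear with
    | zero => simp
    | add a b ha hb => rw [map_add, ha, hb, add_zero]
    | single g r =>
      have : (MonoidAlgebra.single g r : MonoidAlgebra k G) = r • MonoidAlgebra.of k G g := by
        simp [MonoidAlgebra.of_apply, MonoidAlgebra.smul_single]
      rw [this, map_smul, key, smul_zero]
  exact LinearMap.ext hall
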